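/- Let R be a commutative ring, let p_1, …, p_m (m ≥ 1) be pairwise distinct maximal ideals of R, and set a = p_1 ⋯ p_m. Then for every b ∈ R, the ideal ⟨b⟩ + a equals the product of those p_i that contain b, i.e. ⟨b⟩ + a = ∏_{i : b ∈ p_i} p_i, where the empty product is the unit ideal R. -/

import Mathlib

open Classical

private lemma mem_prod_of_forall_mem {R : Type*} [CommRing R] {ι : Type*} [DecidableEq ι]
    (t : Finset ι) (J : ι → Ideal R)
    (hcop : ∀ i ∈ t, ∀ j ∈ t, i ≠ j → J i ⊔ J j = ⊤)
    (b : R) (hb : ∀ i ∈ t, b ∈ J i) : b ∈ ∏ i ∈ t, J i := by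
  induction t using Finset.induction with
  | empty => simp
  | @insert a s hi ih =>
    rw [Finset.prod_insert hi, Ideal.mul_eq_inf_of_coprime]
    · exact ⟨hb a (Finset.mem_insert_self a s), ih
        (fun i hi' j hj' => hcop i (Finset.mem_insert_of_mem hi') j (Finset.mem_insert_of_mem hj'))
        (fun i hi' => hb i (Finset.mem_insert_of_mem hi'))⟩
    · exact Ideal.sup_prod_eq_top fun i hi' =>
        hcop a (Finset.mem_insert_self a s) i (Finset.mem_insert_of_mem hi')
        (fun h => hi (h ▸ hi'))

/-- Let `p 1, …, p m` (`m ≥ 1`) be pairwise distinct maximal ideals of a commutative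
ring `R` and `a = p 1 ⋯ p m`. Then for every `b ∈ R`, the ideal `⟨b⟩ + a` equals the
product of those `p i` that contain `b` (the empty product being the unit ideal). -/
theorem span_add_eq_prod_of_mem {R : Type*} [CommRing R]
    (m : ℕ) (hm : 1 ≤ m) (p : Fin m → Ideal R)
    (hmax : ∀ i, (p i).IsMaximal) (hinj : Function.Injective p)
    (a : Ideal R) (hap : a = ∏ i, p i) (b : R) :
    Ideal.span {b} + a = ∏ i ∈ Finset.univ.filter (fun i => b ∈ p i), p i := by
  set S := Finset.univ.filter (fun i => b ∈ p i) with hS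
  have hcop : ∀ i j : Fin m, i ≠ j → p i ⊔ p j = ⊤ := fun i j hij =>
    (hmax i).coprime_of_ne (hmax j) (fun h => hij (hinj h))
  rw [Ideal.add_eq_sup]
  apply le_antisymm
  · apply sup_le
    · rw [Ideal.span_le, Set.singleton_subset_iff]
      exact mem_prod_of_forall_mem S p
        (fun i _ j _ hij => hcop i j hij) b
        (fun i hi => (Finset.mem_filter.mp hi).2)
    · rw [hap, ← Finset.prod_filter_mul_prod_filter_not Finset.univ (fun i => b ∈ p i), ← hS]
      exact Ideal.mul_le_left
  · have hcb : Ideal.span {b} ⊔ ∏ i ∈ Finset.univ.filter (fun i => ¬ b ∈ p i), p i = ⊤ := by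
      apply Ideal.sup_prod_eq_top
      intro i hi
      have hbi : b ∉ p i := (Finset.mem_filter.mp hi).2
      by_contra h
      have heq : p i = Ideal.span {b} ⊔ p i := (hmax i).eq_of_le h le_sup_right
      exact hbi (heq ▸ Ideal.mem_sup_left (Ideal.mem_span_singleton_self b))
    calc ∏ i ∈ S, p i
        = (∏ i ∈ S, p i) * (Ideal.span {b} ⊔ ∏ i ∈ Finset.univ.filter (fun i => ¬ b ∈ p i), p i) := by
          rw [hcb, Ideal.mul_top]
      _ = (∏ i ∈ S, p i) * Ideal.span {b} ⊔
            (∏ i ∈ S, p i) * ∏ i ∈ Finset.univ.filter (fun i => ¬ b ∈ p i), p i := Ideal.mul_sup _ _ _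
      _ ≤ Ideal.span {b} ⊔ a := by
          apply sup_le_sup Ideal.mul_le_right
          rw [hap, ← Finset.prod_filter_mul_prod_filter_not Finset.univ (fun i => b ∈ p i), ← hS]
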